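/- Let E be a directed graph on a vertex type V, let v, w be vertices, and let x be a vertex not in Z = {z | there is a path from w to z under E and a path from z to v under E}. Then for every vertex y, x and y are strongly connected under E + (v,w) if and only if x and y are strongly connected under E. That is, adding the arc (v,w) changes the strong component of no vertex outside Z: at most the single new component with vertex set Z is created. -/

import Mathlib

private lemma addArc_path_decomp {V : Type*} {E : V → V → Prop} {v w a b : V}
    (h : Relation.ReflTransGen (fun a b => E a b ∨ (a = v ∧ b = w)) a b) :
    Relation.ReflTransGen E a b ∨
      (Relation.ReflTransGen E a v ∧ Relation.ReflTransGen E w b) := by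
  induction h with
  | refl => exact Or.inl .refl
  | tail _ hbc ih =>
    rcases hbc with hE | ⟨rfl, rfl⟩
    · rcases ih with h | ⟨h1, h2⟩
      · exact Or.inl (h.tail hE)
      · exact Or.inr ⟨h1, h2.tail hE⟩
    · rcases ih with h | ⟨h1, _⟩
      · exact Or.inr ⟨h, .refl⟩
      · exact Or.inr ⟨h1, .refl⟩

/-- Adding the arc `(v,w)` changes the strong component of no vertex outside
`Z = {z | w ⟶* z and z ⟶* v under E}`: for `x ∉ Z`, `x` is strongly
connected to `y` in `E + (v,w)` iff it is in `E`. Hence at most the single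
new component with vertex set `Z` is created. -/
theorem addArc_strong_component_unchanged_outside
    {V : Type*} (E : V → V → Prop) (v w : V) (x : V)
    (hx : x ∉ {z | Relation.ReflTransGen E w z ∧ Relation.ReflTransGen E z v}) :
    ∀ y : V,
      (Relation.ReflTransGen (fun a b => E a b ∨ (a = v ∧ b = w)) x y ∧
       Relation.ReflTransGen (fun a b => E a b ∨ (a = v ∧ b = w)) y x) ↔
      (Relation.ReflTransGen E x y ∧ Relation.ReflTransGen E y x) := by
  intro y
  constructor
  · rintro ⟨hxy, hyx⟩
    rcases addArc_path_decomp hxy with h1 | ⟨hxv, hwy⟩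
    · rcases addArc_path_decomp hyx with h2 | ⟨hyv, hwx⟩
      · exact ⟨h1, h2⟩
      · exact absurd ⟨hwx, h1.trans hyv⟩ hx
    · rcases addArc_path_decomp hyx with h2 | ⟨hyv, hwx⟩
      · exact absurd ⟨hwy.trans h2, hxv⟩ hx
      · exact absurd ⟨hwx, hxv⟩ hx
  · rintro ⟨h1, h2⟩
    exact ⟨Relation.ReflTransGen.mono (fun a b h => Or.inl h) _ _ h1, Relation.ReflTransGen.mono (fun a b h => Or.inl h) _ _ h2⟩
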